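/- Let φ_1,...,φ_k be positive linear maps on B(H) and suppose S ∈ B(H) is positive with (id − φ_1) ∘ ··· ∘ (id − φ_k)(S) ≥ 0, and that φ_1^m(I) → 0 in the weak operator topology. If (id − φ_1) ∘ (id − φ_2) ∘ ··· ∘ (id − φ_k)(S) ≥ 0 and the maps commute, then (id − φ_2) ∘ ··· ∘ (id − φ_k)(S) ≥ 0. -/

import Mathlib

open Filter ContinuousLinearMap RCLike

section Aux

variable {H : Type*} [NormedAddCommGroup H] [InnerProductSpace ℂ H] [CompleteSpace H]

lemma aux_smul_one_pos (r : ℝ) (hr : 0 ≤ r) : ((r : ℂ) • (1 : H →L[ℂ] H)).IsPositive := by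
  refine isPositive_def'.mpr ⟨IsSelfAdjoint.smul (RCLike.conj_ofReal r) (IsSelfAdjoint.one _), fun x => ?_⟩
  rw [reApplyInnerSelf_apply]
  simp only [smul_apply, one_apply, inner_smul_left]
  rw [Complex.conj_ofReal]
  simp only [RCLike.re_to_complex, Complex.mul_re, Complex.ofReal_re, Complex.ofReal_im,
    zero_mul, sub_zero]
  have h := inner_self_nonneg (𝕜 := ℂ) (x := x)
  simp only [RCLike.re_to_complex] at h
  exact mul_nonneg hr h

lemma aux_norm_add_pos {A : H →L[ℂ] H} (hA : IsSelfAdjoint A) :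
    (((‖A‖ : ℂ)) • (1 : H →L[ℂ] H) + A).IsPositive := by
  refine isPositive_def'.mpr ⟨(IsSelfAdjoint.smul (RCLike.conj_ofReal ‖A‖) (IsSelfAdjoint.one _)).add hA, fun x => ?_⟩
  rw [reApplyInnerSelf_apply]
  simp only [add_apply, smul_apply, ContinuousLinearMap.one_apply, inner_add_left, inner_smul_left, map_add]
  have h1 : |re (inner ℂ (A x) x : ℂ)| ≤ ‖A‖ * ‖x‖ ^ 2 := by
    refine (RCLike.abs_re_le_norm _).trans ?_
    calc ‖(inner ℂ (A x) x : ℂ)‖ ≤ ‖A x‖ * ‖x‖ := norm_inner_le_norm _ _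
      _ ≤ ‖A‖ * ‖x‖ * ‖x‖ := by gcongr; exact A.le_opNorm x
      _ = ‖A‖ * ‖x‖ ^ 2 := by ring
  have h2 : re ((starRingEnd ℂ) (‖A‖ : ℂ) * (inner ℂ x x : ℂ)) = ‖A‖ * ‖x‖ ^ 2 := by
    rw [Complex.conj_ofReal]
    simp [Complex.mul_re, inner_self_eq_norm_sq (𝕜 := ℂ), ← Complex.ofReal_pow, Complex.ofReal_re]
  rw [h2]
  have := neg_abs_le (re (inner ℂ (A x) x : ℂ))
  linarith

lemma aux_pos_map_sa {ψ : (H →L[ℂ] H) →ₗ[ℂ] (H →L[ℂ] H)}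
    (hψ : ∀ A : H →L[ℂ] H, A.IsPositive → (ψ A).IsPositive)
    {A : H →L[ℂ] H} (hA : IsSelfAdjoint A) : IsSelfAdjoint (ψ A) := by
  have h1 := (hψ _ (aux_norm_add_pos hA)).isSelfAdjoint
  have h2 := (hψ _ (aux_smul_one_pos ‖A‖ (norm_nonneg A))).isSelfAdjoint
  have : ψ A = ψ ((‖A‖ : ℂ) • 1 + A) - ψ ((‖A‖ : ℂ) • 1) := by
    rw [map_add]; abel
  rw [this]
  exact h1.sub h2

end Aux

/-- The defect map `(id − φ₁) ∘ ⋯ ∘ (id − φ_k)` built from the tail maps φ₁,…,φ_k of a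
family indexed by Fin (k+1) (the 0-th map being excluded). -/
def DTail {H : Type*} [NormedAddCommGroup H] [InnerProductSpace ℂ H] {k : ℕ}
    (φ : Fin (k + 1) → ((H →L[ℂ] H) →ₗ[ℂ] (H →L[ℂ] H))) : (H →L[ℂ] H) → (H →L[ℂ] H) :=
  (List.finRange k).foldr (fun i f => (fun A => A - φ i.succ A) ∘ f) id

lemma DTail_sa {H : Type*} [NormedAddCommGroup H] [InnerProductSpace ℂ H] [CompleteSpace H]
    {k : ℕ} (φ : Fin (k + 1) → ((H →L[ℂ] H) →ₗ[ℂ] (H →L[ℂ] H)))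
    (hpos : ∀ i (A : H →L[ℂ] H), A.IsPositive → (φ i A).IsPositive)
    (S : H →L[ℂ] H) (hS : IsSelfAdjoint S) : IsSelfAdjoint (DTail φ S) := by
  unfold DTail
  induction (List.finRange k) with
  | nil => exact hS
  | cons i l ih =>
    simp only [List.foldr_cons, Function.comp_apply]
    exact ih.sub (aux_pos_map_sa (hpos i.succ) ih)

/-- Let φ₀, φ₁, …, φ_k be commuting positive linear maps on B(H), S positive with
(id−φ₀)∘(id−φ₁)∘⋯∘(id−φ_k)(S) ≥ 0, and φ₀ pure (φ₀^m(I) → 0 weakly). Then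
(id−φ₁)∘⋯∘(id−φ_k)(S) ≥ 0. -/
theorem stmt16 {H : Type*} [NormedAddCommGroup H] [InnerProductSpace ℂ H] [CompleteSpace H]
    {k : ℕ} (φ : Fin (k + 1) → ((H →L[ℂ] H) →ₗ[ℂ] (H →L[ℂ] H)))
    (hcomm : ∀ i j, (φ i).comp (φ j) = (φ j).comp (φ i))
    (hpos : ∀ i (A : H →L[ℂ] H), A.IsPositive → (φ i A).IsPositive)
    (hpure : ∀ x y : H,
      Filter.Tendsto (fun m : ℕ => (inner ℂ (((fun A => φ 0 A)^[m] (1 : H →L[ℂ] H)) x) y : ℂ))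
        Filter.atTop (nhds 0))
    (S : H →L[ℂ] H) (hS : S.IsPositive)
    (hDS : (DTail φ S - φ 0 (DTail φ S)).IsPositive) :
    (DTail φ S).IsPositive := by
  set B := DTail φ S with hBdef
  have hB : IsSelfAdjoint B := DTail_sa φ hpos S hS.isSelfAdjoint
  set T : (H →L[ℂ] H) → (H →L[ℂ] H) := fun A => φ 0 A with hT
  -- iterates of T are the linear map (φ 0) ^ m
  have hTpow : ∀ (m : ℕ) (A : H →L[ℂ] H), T^[m] A = ((φ 0) ^ m) A := by
    intro m
    induction m with
    | zero => intro A; simp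
    | succ m ih =>
      intro A
      rw [Function.iterate_succ_apply, ih, pow_succ, Module.End.mul_apply]
  -- iterated positivity
  have hiterpos : ∀ (m : ℕ) (A : H →L[ℂ] H), A.IsPositive → (T^[m] A).IsPositive := by
    intro m
    induction m with
    | zero => intro A hA; simpa using hA
    | succ m ih =>
      intro A hA
      rw [Function.iterate_succ_apply']
      exact hpos 0 _ (ih A hA)
  -- telescoping: B - T^[m] B ≥ 0
  have htel : ∀ m : ℕ, (B - T^[m] B).IsPositive := by
    intro m
    induction m with
    | zero => simpa using isPositive_zero
    | succ m ih =>
      have h1 : (T^[m] (B - φ 0 B)).IsPositive := hiterpos m _ hDS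
      have h2 : B - T^[m+1] B = (B - T^[m] B) + T^[m] (B - φ 0 B) := by
        rw [hTpow m, hTpow (m+1), hTpow m, map_sub, pow_succ, Module.End.mul_apply]
        abel
      rw [h2]
      exact ih.add h1
  -- T^[m] B + ‖B‖ • T^[m] 1 ≥ 0
  have hlow : ∀ m : ℕ, (T^[m] B + (‖B‖ : ℂ) • T^[m] 1).IsPositive := by
    intro m
    have : T^[m] B + (‖B‖ : ℂ) • T^[m] 1 = T^[m] ((‖B‖ : ℂ) • 1 + B) := by
      rw [hTpow, hTpow, hTpow, map_add, map_smul]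
      abel
    rw [this]
    exact hiterpos m _ (aux_norm_add_pos hB)
  refine isPositive_def'.mpr ⟨hB, fun x => ?_⟩
  rw [reApplyInnerSelf_apply]
  -- limit argument
  have hlim : Tendsto (fun m : ℕ => -(‖B‖ * re (inner ℂ (T^[m] (1 : H →L[ℂ] H) x) x : ℂ)))
      atTop (nhds 0) := by
    have := (Complex.continuous_re.tendsto 0).comp (hpure x x)
    simpa using (this.const_mul ‖B‖).neg
  refine le_of_tendsto hlim (Eventually.of_forall fun m => ?_)
  have h1 := (htel m).re_inner_nonneg_left x
  have h2 := (hlow m).re_inner_nonneg_left x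
  simp only [sub_apply, inner_sub_left, map_sub, add_apply, smul_apply, inner_add_left,
    inner_smul_left, map_add] at h1 h2
  have h3 : re ((starRingEnd ℂ) (‖B‖ : ℂ) * (inner ℂ (T^[m] (1:H →L[ℂ] H) x) x : ℂ))
      = ‖B‖ * re (inner ℂ (T^[m] (1:H →L[ℂ] H) x) x : ℂ) := by
    rw [Complex.conj_ofReal]
    simp [Complex.mul_re]
  rw [h3] at h2
  linarith
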